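/- Let d be a natural number and let F be a linear subspace of R = C^∞(M,ℝ) which is transverse to every ideal of R of finite codimension at most d+1 (i.e., F + J = R for every such ideal J). Then for any two ideals I, I' of R of finite codimension at most d, one has I ⊆ I' if and only if F ∩ I ⊆ F ∩ I'. In particular the map sending an ideal I of codimension exactly d to F ∩ I is injective. -/

import Mathlib

open scoped Manifold
open Module Filter Topology

noncomputable section

/-- The ℝ-algebra of smooth real-valued functions on a manifold `M` modelled on `ℝ^m`. -/
abbrev SmoothFns (m : ℕ) (M : Type*) [TopologicalSpace M]
    [ChartedSpace (EuclideanSpace ℝ (Fin m)) M] : Type _ :=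
  C^(⊤ : ℕ∞)⟮𝓡 m, M; 𝓘(ℝ, ℝ), ℝ⟯

variable {m : ℕ} {M : Type*} [TopologicalSpace M] [T2Space M] [SecondCountableTopology M]
  [ChartedSpace (EuclideanSpace ℝ (Fin m)) M] [IsManifold (𝓡 m) (⊤ : ℕ∞) M]

/-- The ideal `𝔪ₓ` of smooth functions vanishing at the point `x`. -/
def mIdeal (x : M) : Ideal (SmoothFns m M) where
  carrier := {f | f x = 0}
  add_mem' := by intro f g hf hg; simp_all
  zero_mem' := by simp
  smul_mem' := by intro c f hf; simp_all

/-- The ideal `𝔫ₓ` of smooth functions vanishing on some neighbourhood of the point `x`. -/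
def nIdeal (x : M) : Ideal (SmoothFns m M) where
  carrier := {f | ∀ᶠ y in 𝓝 x, f y = 0}
  add_mem' := by
    intro f g hf hg
    filter_upwards [hf, hg] with y h1 h2
    simp [h1, h2]
  zero_mem' := by filter_upwards with y; simp
  smul_mem' := by
    intro c f hf
    filter_upwards [hf] with y h
    simp [h]

/-- The spectrum of an ideal: the set of common zeros of its elements. -/
def idealSpec (I : Ideal (SmoothFns m M)) : Set M :=
  {x : M | ∀ f ∈ I, f x = 0}

set_option linter.unusedSectionVars false
set_option linter.unnecessarySimpa false
set_option maxHeartbeats 1000000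
set_option synthInstance.maxHeartbeats 400000

theorem aux_isUnit (g : SmoothFns m M) (h : ∀ x, g x ≠ 0) : IsUnit g := by
  refine isUnit_iff_exists_inv.mpr ⟨⟨fun x => (g x)⁻¹, g.contMDiff.inv₀ h⟩, ?_⟩
  ext x
  exact mul_inv_cancel₀ (h x)

theorem aux_algebraMap_apply (a : ℝ) (x : M) : (algebraMap ℝ (SmoothFns m M) a) x = a := rfl

/-- residue field of a finite-codimension maximal ideal is ℝ -/
theorem aux_residue (m0 : Ideal (SmoothFns m M)) (hmax : m0.IsMaximal)
    (hfd : FiniteDimensional ℝ (SmoothFns m M ⧸ m0)) (f : SmoothFns m M) :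
    ∃ a : ℝ, f - algebraMap ℝ (SmoothFns m M) a ∈ m0 := by
  haveI := hmax
  haveI : Algebra.IsAlgebraic ℝ (SmoothFns m M ⧸ m0) := Algebra.IsAlgebraic.of_finite ℝ _
  let ψ0 : (SmoothFns m M ⧸ m0) →ₐ[ℝ] ℂ := IsAlgClosed.lift
  let ψ : SmoothFns m M →ₐ[ℝ] ℂ := ψ0.comp (Ideal.Quotient.mkₐ ℝ m0)
  have hker : m0 = RingHom.ker (ψ : SmoothFns m M →+* ℂ) := by
    refine hmax.eq_of_le ?_ ?_
    · intro h
      have h1 : ψ 1 = 0 := by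
        have : (1 : SmoothFns m M) ∈ RingHom.ker (ψ : SmoothFns m M →+* ℂ) := h ▸ trivial
        simpa [RingHom.mem_ker] using this
      simp at h1
    · intro x hx
      have : Ideal.Quotient.mk m0 x = 0 := Ideal.Quotient.eq_zero_iff_mem.mpr hx
      simp [RingHom.mem_ker, ψ, this]
  set z : ℂ := ψ f with hz
  have hb : z.im = 0 := by
    by_contra hb
    set a := z.re
    set b := z.im
    set g : SmoothFns m M :=
      (f - algebraMap ℝ (SmoothFns m M) a) ^ 2 + algebraMap ℝ (SmoothFns m M) (b ^ 2) with hg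
    have hunit : IsUnit g := by
      apply aux_isUnit
      intro x
      have : g x = (f x - a) ^ 2 + b ^ 2 := by simp [hg, aux_algebraMap_apply]
      rw [this]
      positivity
    have h0 : ψ g = 0 := by
      have h1 : ψ g = (z - (a : ℂ)) ^ 2 + ((b : ℂ)) ^ 2 := by
        simp [hg, map_add, map_pow, map_sub, AlgHom.commutes, Complex.coe_algebraMap, hz]
      have hw : z - (a : ℂ) = (b : ℂ) * Complex.I := by
        apply Complex.ext <;> simp [a, b]
      rw [h1, hw, mul_pow, Complex.I_sq]
      ring
    exact (hunit.map ψ).ne_zero h0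
  refine ⟨z.re, ?_⟩
  rw [hker, RingHom.mem_ker]
  have : ψ (f - algebraMap ℝ (SmoothFns m M) z.re) = z - (z.re : ℂ) := by
    simp [map_sub, AlgHom.commutes, Complex.coe_algebraMap, hz]
  rw [show ((ψ : SmoothFns m M →+* ℂ) (f - algebraMap ℝ (SmoothFns m M) z.re))
      = ψ (f - algebraMap ℝ (SmoothFns m M) z.re) from rfl, this]
  apply Complex.ext <;> simp [hb]

theorem aux_fd_inf {X : Type*} [AddCommGroup X] [Module ℝ X] (U W : Submodule ℝ X)
    [FiniteDimensional ℝ (X ⧸ U)] [FiniteDimensional ℝ (X ⧸ W)] :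
    FiniteDimensional ℝ (X ⧸ (U ⊓ W)) := by
  have hk : U ⊓ W ≤ LinearMap.ker (U.mkQ.prod W.mkQ) := by
    simp [LinearMap.ker_prod]
  let φ := (U ⊓ W).liftQ (U.mkQ.prod W.mkQ) hk
  have hinj : LinearMap.ker φ = ⊥ :=
    Submodule.ker_liftQ_eq_bot _ _ _ (by simp [LinearMap.ker_prod])
  exact FiniteDimensional.of_injective φ (LinearMap.ker_eq_bot.mp hinj)

theorem aux_quot (X : Type*) [AddCommGroup X] [Module ℝ X] (U W : Submodule ℝ X) (h : U ≤ W)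
    [FiniteDimensional ℝ (X ⧸ U)] :
    FiniteDimensional ℝ (X ⧸ W) ∧
      finrank ℝ (X ⧸ U) = finrank ℝ (X ⧸ W) + finrank ℝ (W.map U.mkQ) := by
  have hk : U ≤ LinearMap.ker W.mkQ := by rwa [Submodule.ker_mkQ]
  let q : (X ⧸ U) →ₗ[ℝ] (X ⧸ W) := U.liftQ W.mkQ hk
  have hsurj : Function.Surjective q := by
    intro y
    obtain ⟨x, rfl⟩ := W.mkQ_surjective y
    exact ⟨U.mkQ x, rfl⟩
  have hfd : FiniteDimensional ℝ (X ⧸ W) := Module.Finite.of_surjective q hsurj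
  refine ⟨hfd, ?_⟩
  have hker : LinearMap.ker q = W.map U.mkQ := by
    rw [Submodule.ker_liftQ, Submodule.ker_mkQ]
  have hrange : LinearMap.range q = ⊤ := LinearMap.range_eq_top.mpr hsurj
  have := LinearMap.finrank_range_add_finrank_ker q
  rw [hrange, hker] at this
  rw [← this, finrank_top]

theorem aux_key (d : ℕ) (F : Submodule ℝ (SmoothFns m M))
    (hF : ∀ J : Ideal (SmoothFns m M), FiniteDimensional ℝ (SmoothFns m M ⧸ J) →
      Module.finrank ℝ (SmoothFns m M ⧸ J) ≤ d + 1 → F ⊔ J.restrictScalars ℝ = ⊤)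
    (I I' : Ideal (SmoothFns m M))
    (hI : FiniteDimensional ℝ (SmoothFns m M ⧸ I)) (hdI : finrank ℝ (SmoothFns m M ⧸ I) ≤ d)
    (hI' : FiniteDimensional ℝ (SmoothFns m M ⧸ I'))
    (hsub : F ⊓ I.restrictScalars ℝ ≤ F ⊓ I'.restrictScalars ℝ) : I ≤ I' := by
  set R := SmoothFns m M
  by_contra hne
  set A : Ideal R := I ⊓ I' with hA
  set Ar : Submodule ℝ R := A.restrictScalars ℝ with hAr
  set Ir : Submodule ℝ R := I.restrictScalars ℝ with hIr
  set I'r : Submodule ℝ R := I'.restrictScalars ℝ with hI'r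
  -- transfer finite-dimensionality to restrictScalars quotients
  haveI hIfd : FiniteDimensional ℝ (R ⧸ Ir) :=
    Module.Finite.equiv (Submodule.Quotient.restrictScalarsEquiv ℝ I).symm
  haveI hI'fd : FiniteDimensional ℝ (R ⧸ I'r) :=
    Module.Finite.equiv (Submodule.Quotient.restrictScalarsEquiv ℝ I').symm
  have hArInf : Ar = Ir ⊓ I'r := rfl
  haveI hAfd : FiniteDimensional ℝ (R ⧸ Ar) := by
    rw [hArInf]; exact aux_fd_inf Ir I'r
  -- the collection of intermediate ideals
  set S : Set (Ideal R) := {J | A ≤ J ∧ J ≤ I ∧ ¬ I ≤ J} with hS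
  have hAS : A ∈ S := ⟨le_refl A, inf_le_left, fun h => hne (le_trans h inf_le_right)⟩
  set rk : Ideal R → ℕ := fun J => finrank ℝ ((J.restrictScalars ℝ).map Ar.mkQ) with hrk
  set T : Set ℕ := rk '' S with hT
  have hTne : T.Nonempty := ⟨rk A, A, hAS, rfl⟩
  have hTbdd : BddAbove T := by
    refine ⟨finrank ℝ (R ⧸ Ar), ?_⟩
    rintro _ ⟨J, _, rfl⟩
    exact Submodule.finrank_le _
  obtain ⟨J, hJS, hJrk⟩ : ∃ J ∈ S, rk J = sSup T := by
    obtain ⟨J, hJ, h⟩ := Nat.sSup_mem hTne hTbdd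
    exact ⟨J, hJ, h⟩
  -- maximality of J
  have hmaxJ : ∀ K : Ideal R, J ≤ K → K ≤ I → ¬ I ≤ K → K = J := by
    intro K hJK hKI hIK
    have hKS : K ∈ S := ⟨le_trans hJS.1 hJK, hKI, hIK⟩
    have hle : rk K ≤ rk J := hJrk ▸ le_csSup hTbdd ⟨K, hKS, rfl⟩
    have hmaple : (J.restrictScalars ℝ).map Ar.mkQ ≤ (K.restrictScalars ℝ).map Ar.mkQ :=
      Submodule.map_mono (fun x hx => hJK hx)
    have heq : (J.restrictScalars ℝ).map Ar.mkQ = (K.restrictScalars ℝ).map Ar.mkQ :=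
      Submodule.eq_of_le_of_finrank_le hmaple hle
    refine le_antisymm ?_ hJK
    intro x hxK
    have : Ar.mkQ x ∈ (J.restrictScalars ℝ).map Ar.mkQ := by
      rw [heq]; exact ⟨x, hxK, rfl⟩
    obtain ⟨y, hyJ, hyx⟩ := this
    have : x - y ∈ Ar := by
      rw [← Submodule.Quotient.mk_eq_zero]
      have : Ar.mkQ (x - y) = 0 := by rw [map_sub, hyx, sub_self]
      simpa [Submodule.mkQ_apply] using this
    have hxy : x - y ∈ J := hJS.1 this
    simpa using J.add_mem hxy hyJ
  -- pick g ∈ I \ J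
  obtain ⟨g, hgI, hgJ⟩ : ∃ g ∈ I, g ∉ J := SetLike.not_le_iff_exists.mp hJS.2.2
  -- I = J ⊔ span {g}
  have hIL : I ≤ J ⊔ Ideal.span {g} := by
    by_contra hIL
    have : J ⊔ Ideal.span {g} = J := by
      refine hmaxJ _ le_sup_left ?_ hIL
      refine sup_le hJS.2.1 ?_
      rwa [Ideal.span_singleton_le_iff_mem]
    exact hgJ (this ▸ (le_sup_right.trans this.le) (Ideal.mem_span_singleton_self g))
  -- the colon ideal m0 = (J : g)
  set m0 : Ideal R :=
    { carrier := {r : R | r * g ∈ J}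
      add_mem' := fun {a b} ha hb => by
        simpa [add_mul] using J.add_mem ha hb
      zero_mem' := by simpa using J.zero_mem
      smul_mem' := fun c x hx => by
        simpa [smul_eq_mul, mul_assoc] using J.mul_mem_left c hx } with hm0
  have hmem_m0 : ∀ r : R, r ∈ m0 ↔ r * g ∈ J := fun r => Iff.rfl
  have hm0max : m0.IsMaximal := by
    rw [Ideal.isMaximal_iff]
    constructor
    · intro h1
      rw [hmem_m0, one_mul] at h1
      exact hgJ h1
    · intro K x hm0K hxm0 hxK
      have hxg : x * g ∉ J := hxm0
      have hIL' : I ≤ J ⊔ Ideal.span {x * g} := by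
        by_contra hc
        have : J ⊔ Ideal.span {x * g} = J := by
          refine hmaxJ _ le_sup_left ?_ hc
          refine sup_le hJS.2.1 ?_
          rw [Ideal.span_singleton_le_iff_mem]
          exact I.mul_mem_left x hgI
        exact hxg ((le_sup_right.trans this.le) (Ideal.mem_span_singleton_self _))
      obtain ⟨j, hjJ, c, hc, hsum⟩ := Submodule.mem_sup.mp (hIL' hgI)
      obtain ⟨s, hs⟩ := Ideal.mem_span_singleton'.mp hc
      have h1sx : (1 - s * x) * g ∈ J := by
        have h3 : g - s * (x * g) = j := by rw [hs, ← hsum]; ring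
        have h4 : (1 - s * x) * g = g - s * (x * g) := by ring
        rw [h4, h3]
        exact hjJ
      have : (1 : R) - s * x ∈ K := hm0K h1sx
      have h2 : s * x ∈ K := K.mul_mem_left s hxK
      simpa using K.add_mem this h2
  have hAm0 : A ≤ m0 := fun r hr => (hmem_m0 r).mpr (hJS.1 (A.mul_mem_right g hr))
  -- m0 has finite codimension
  have hm0fd' := (aux_quot R Ar (m0.restrictScalars ℝ) (fun x hx => hAm0 hx)).1
  haveI hm0fd : FiniteDimensional ℝ (R ⧸ m0) :=
    Module.Finite.equiv (Submodule.Quotient.restrictScalarsEquiv ℝ m0)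
  -- J has finite codimension
  have hJA : Ar ≤ J.restrictScalars ℝ := fun x hx => hJS.1 hx
  haveI hJfd : FiniteDimensional ℝ (R ⧸ J.restrictScalars ℝ) :=
    (aux_quot R Ar (J.restrictScalars ℝ) hJA).1
  -- the image of I in R⧸J is at most one-dimensional
  set Jr := J.restrictScalars ℝ with hJrdef
  have hspan : Ir.map Jr.mkQ ≤ Submodule.span ℝ {Jr.mkQ g} := by
    rintro _ ⟨x, hxI, rfl⟩
    obtain ⟨j, hjJ, c, hc, hsum⟩ := Submodule.mem_sup.mp (hIL hxI)
    obtain ⟨s, hs⟩ := Ideal.mem_span_singleton'.mp hc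
    obtain ⟨a, ha⟩ := aux_residue m0 hm0max hm0fd s
    have hdiff : x - a • g ∈ J := by
      have h1 : (s - algebraMap ℝ R a) * g ∈ J := ha
      have h2 : x - a • g = j + (s - algebraMap ℝ R a) * g := by
        rw [Algebra.smul_def]
        rw [← hsum, ← hs]
        ring
      rw [h2]
      exact J.add_mem hjJ h1
    rw [Submodule.mem_span_singleton]
    refine ⟨a, ?_⟩
    rw [← sub_eq_zero, ← map_smul, ← map_sub]
    rw [Submodule.mkQ_apply, Submodule.Quotient.mk_eq_zero]
    have : a • g - x ∈ J := by simpa [neg_sub] using J.neg_mem hdiff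
    exact this
  have hrank1 : finrank ℝ (Ir.map Jr.mkQ) ≤ 1 := by
    have hg0 : Jr.mkQ g ≠ 0 := by
      simpa [Submodule.mkQ_apply, Submodule.Quotient.mk_eq_zero] using (show g ∉ Jr from hgJ)
    calc finrank ℝ (Ir.map Jr.mkQ) ≤ finrank ℝ (Submodule.span ℝ {Jr.mkQ g}) :=
          Submodule.finrank_mono hspan
      _ = 1 := finrank_span_singleton hg0
  -- finrank bound for J
  have hJd : finrank ℝ (R ⧸ Jr) ≤ d + 1 := by
    have h2 := (aux_quot R Jr Ir (fun x hx => hJS.2.1 hx)).2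
    have hIreq : finrank ℝ (R ⧸ Ir) = finrank ℝ (R ⧸ I) :=
      LinearEquiv.finrank_eq (Submodule.Quotient.restrictScalarsEquiv ℝ I)
    have hIrd : finrank ℝ (R ⧸ Ir) ≤ d := by rw [hIreq]; exact hdI
    rw [h2]
    exact add_le_add hIrd hrank1
  -- apply transversality
  have hsup : F ⊔ Jr = ⊤ := by
    apply hF J (Module.Finite.equiv (Submodule.Quotient.restrictScalarsEquiv ℝ J))
    rwa [← LinearEquiv.finrank_eq (Submodule.Quotient.restrictScalarsEquiv ℝ J)]
  -- derive I ≤ J, contradiction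
  apply hJS.2.2
  intro x hxI
  have : (x : R) ∈ F ⊔ Jr := hsup ▸ Submodule.mem_top
  obtain ⟨f, hfF, j, hjJ, hsum⟩ := Submodule.mem_sup.mp this
  have hfI : f ∈ I := by
    have : f = x - j := by rw [← hsum]; ring
    rw [this]
    exact I.sub_mem hxI (hJS.2.1 hjJ)
  have hfI' : f ∈ I' := (hsub ⟨hfF, hfI⟩).2
  have hfJ : f ∈ J := hJS.1 ⟨hfI, hfI'⟩
  rw [← hsum]
  exact J.add_mem hfJ hjJ

/-- If `F ⊆ R = C^∞(M,ℝ)` is a linear subspace transverse to every ideal of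
finite codimension at most `d+1`, then for ideals `I, I'` of finite codimension at most `d`
one has `I ⊆ I' ↔ F ∩ I ⊆ F ∩ I'`; in particular `I ↦ F ∩ I` is injective on ideals of
codimension exactly `d`. -/
theorem idealInclusion_iff_of_transversal
    (d : ℕ) (F : Submodule ℝ (SmoothFns m M))
    (hF : ∀ J : Ideal (SmoothFns m M), FiniteDimensional ℝ (SmoothFns m M ⧸ J) →
      Module.finrank ℝ (SmoothFns m M ⧸ J) ≤ d + 1 → F ⊔ J.restrictScalars ℝ = ⊤) :
    (∀ I I' : Ideal (SmoothFns m M),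
      FiniteDimensional ℝ (SmoothFns m M ⧸ I) → Module.finrank ℝ (SmoothFns m M ⧸ I) ≤ d →
      FiniteDimensional ℝ (SmoothFns m M ⧸ I') → Module.finrank ℝ (SmoothFns m M ⧸ I') ≤ d →
      (I ≤ I' ↔ F ⊓ I.restrictScalars ℝ ≤ F ⊓ I'.restrictScalars ℝ)) ∧
    (∀ I I' : Ideal (SmoothFns m M),
      FiniteDimensional ℝ (SmoothFns m M ⧸ I) → Module.finrank ℝ (SmoothFns m M ⧸ I) = d →
      FiniteDimensional ℝ (SmoothFns m M ⧸ I') → Module.finrank ℝ (SmoothFns m M ⧸ I') = d →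
      F ⊓ I.restrictScalars ℝ = F ⊓ I'.restrictScalars ℝ → I = I') := by
  
  constructor
  · intro I I' hI hdI hI' hdI'
    constructor
    · intro h x hx
      rw [Submodule.mem_inf] at hx ⊢
      exact ⟨hx.1, h hx.2⟩
    · intro h
      exact aux_key d F hF I I' hI hdI hI' h
  · intro I I' hI hdI hI' hdI' heq
    exact le_antisymm (aux_key d F hF I I' hI hdI.le hI' heq.le)
      (aux_key d F hF I' I hI' hdI'.le hI heq.ge)
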